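/- Let K ⊆ [0,1]² be the attractor of an IFS {f_a}_{a∈A} of contracting similarities, and let L be a recurrent set of lines. Fix θ ∈ [0,π). If the set {t ∈ ℝ : the line with direction data (θ, t) belongs to L} contains an interval, then the orthogonal projection Π_θ(K) contains an interval. -/

import Mathlib

open Metric Set MeasureTheory Filter Real

noncomputable section

abbrev E2 := EuclideanSpace ℝ (Fin 2)

def unitSq : Set E2 := {x | ∀ i, x i ∈ Set.Icc (0:ℝ) 1}

def IsContractingSimilarity (f : E2 → E2) : Prop :=
  ∃ r : ℝ, 0 < r ∧ r < 1 ∧ ∀ x y, dist (f x) (f y) = r * dist x y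

def IsLine (u : Set E2) : Prop :=
  ∃ p v : E2, v ≠ 0 ∧ u = {x | ∃ t : ℝ, x = p + t • v}

def proj (θ : ℝ) (x : E2) : ℝ := -Real.sin θ * x 0 + Real.cos θ * x 1

def lineAt (θ t : ℝ) : Set E2 := {x | proj θ x = t}

theorem stmt4 {A : Type*} [Fintype A] [Nonempty A] (f : A → E2 → E2)
    (hf : ∀ a, IsContractingSimilarity (f a)) (K : Set E2)
    (hKne : K.Nonempty) (hKc : IsCompact K) (hattr : K = ⋃ a, f a '' K)
    (hKI : K ⊆ unitSq) (L : Set (Set E2)) (hLne : L.Nonempty)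
    (hLlines : ∀ u ∈ L, IsLine u)
    (hLbdd : ∃ M : ℝ, ∀ u ∈ L, infDist (0 : E2) u ≤ M)
    (hLrec : ∀ u ∈ L, ∃ a, f a ⁻¹' u ∈ L)
    (θ : ℝ) (hθ : θ ∈ Set.Ico 0 π)
    (hint : ∃ α β : ℝ, α < β ∧ Set.Icc α β ⊆ {t : ℝ | lineAt θ t ∈ L}) :
    ∃ α β : ℝ, α < β ∧ Set.Icc α β ⊆ proj θ '' K := by
  classical
  obtain ⟨α, β, hαβ, hsub⟩ := hint
  refine ⟨α, β, hαβ, fun t ht => ?_⟩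
  have hL0 : lineAt θ t ∈ L := hsub ht
  choose r hr0 hr1 hrd using hf
  obtain ⟨M, hM⟩ := hLbdd
  obtain ⟨q, hq⟩ := hKne
  set R : ℝ := Finset.univ.sup' Finset.univ_nonempty r with hRdef
  have hRa : ∀ a, r a ≤ R := fun a => Finset.le_sup' r (Finset.mem_univ a)
  have hR1 : R < 1 := (Finset.sup'_lt_iff _).2 (fun a _ => hr1 a)
  have hR0 : 0 ≤ R := le_trans (le_of_lt (hr0 (Classical.arbitrary A))) (hRa _)
  -- construct recurrent sequence of lines
  have hrecS : ∀ v : {v : Set E2 // v ∈ L}, ∃ a : A, f a ⁻¹' v.1 ∈ L :=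
    fun v => hLrec v.1 v.2
  choose F hF using hrecS
  let seq : ℕ → {v : Set E2 // v ∈ L} := fun n =>
    Nat.rec ⟨lineAt θ t, hL0⟩ (fun _ v => ⟨f (F v) ⁻¹' v.1, hF v⟩) n
  let g : ℕ → E2 → E2 := fun n =>
    Nat.rec id (fun n gn => fun x => gn (f (F (seq n)) x)) n
  have hgu : ∀ n, ∀ x ∈ (seq n).1, g n x ∈ lineAt θ t := by
    intro n
    induction n with
    | zero => intro x hx; exact hx
    | succ n ih => intro x hx; exact ih _ hx
  have hfK : ∀ a, ∀ x ∈ K, f a x ∈ K := by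
    intro a x hx
    rw [hattr]
    exact mem_iUnion.2 ⟨a, ⟨x, hx, rfl⟩⟩
  have hgK : ∀ n, ∀ x ∈ K, g n x ∈ K := by
    intro n
    induction n with
    | zero => intro x hx; exact hx
    | succ n ih => intro x hx; exact ih _ (hfK _ _ hx)
  have hgd : ∀ n x y, dist (g n x) (g n y) ≤ R ^ n * dist x y := by
    intro n
    induction n with
    | zero => intro x y; simp [g]
    | succ n ih =>
      intro x y
      have h1 : dist (g (n+1) x) (g (n+1) y)
          ≤ R ^ n * dist (f (F (seq n)) x) (f (F (seq n)) y) := ih _ _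
      rw [hrd (F (seq n)) x y] at h1
      calc dist (g (n+1) x) (g (n+1) y) ≤ R ^ n * (r (F (seq n)) * dist x y) := h1
        _ ≤ R ^ n * (R * dist x y) := by
            apply mul_le_mul_of_nonneg_left _ (pow_nonneg hR0 n)
            exact mul_le_mul_of_nonneg_right (hRa _) dist_nonneg
        _ = R ^ (n+1) * dist x y := by ring
  -- pick bounded points on the lines
  have hpn : ∀ n, ∃ p, p ∈ (seq n).1 ∧ dist 0 p ≤ M + 1 := by
    intro n
    obtain ⟨p0, v, hv, he⟩ := hLlines _ (seq n).2
    have hne : (seq n).1.Nonempty := ⟨p0, by rw [he]; exact ⟨0, by simp⟩⟩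
    have h2 : infDist (0 : E2) (seq n).1 < M + 1 :=
      lt_of_le_of_lt (hM _ (seq n).2) (by linarith)
    obtain ⟨p, hp, hd⟩ := (infDist_lt_iff hne).1 h2
    exact ⟨p, hp, hd.le⟩
  choose p hpmem hpd using hpn
  set C : ℝ := M + 1 + dist (0 : E2) q with hC
  have hdxy : ∀ n, dist (g n (p n)) (g n q) ≤ R ^ n * C := by
    intro n
    refine le_trans (hgd n _ _) ?_
    apply mul_le_mul_of_nonneg_left _ (pow_nonneg hR0 n)
    calc dist (p n) q ≤ dist (p n) 0 + dist (0 : E2) q := dist_triangle _ _ _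
      _ ≤ C := by rw [hC, dist_comm (p n) 0]; linarith [hpd n]
  -- the line is closed and nonempty
  have hclosed : IsClosed (lineAt θ t) := by
    have : Continuous fun x : E2 => proj θ x := by
      unfold proj
      exact ((continuous_const.mul ((continuous_apply 0).comp (PiLp.continuous_ofLp 2 _))).add
        (continuous_const.mul ((continuous_apply 1).comp (PiLp.continuous_ofLp 2 _))))
    exact isClosed_eq this continuous_const
  have hlne : (lineAt θ t).Nonempty := by
    refine ⟨WithLp.toLp 2 (fun i => if i = 0 then -(t * Real.sin θ) else t * Real.cos θ : Fin 2 → ℝ), ?_⟩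
    show proj θ _ = t
    simp only [proj]
    norm_num
    linear_combination t * sin_sq_add_cos_sq θ
  -- minimize infDist to the line over K
  have hcont : Continuous fun z : E2 => infDist z (lineAt θ t) :=
    continuous_infDist_pt _
  obtain ⟨y0, hy0K, hy0min⟩ := hKc.exists_isMinOn ⟨q, hq⟩ hcont.continuousOn
  have hle : ∀ n, infDist y0 (lineAt θ t) ≤ R ^ n * C := by
    intro n
    refine le_trans (hy0min (hgK n q hq)) ?_
    refine le_trans (infDist_le_dist_of_mem (hgu n _ (hpmem n))) ?_
    rw [dist_comm]
    exact hdxy n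
  have htend : Tendsto (fun n => R ^ n * C) atTop (nhds 0) := by
    simpa using (tendsto_pow_atTop_nhds_zero_of_lt_one hR0 hR1).mul_const C
  have hzero : infDist y0 (lineAt θ t) = 0 :=
    le_antisymm (ge_of_tendsto' htend hle) infDist_nonneg
  have hy0line : y0 ∈ lineAt θ t := by
    rw [← hclosed.closure_eq]
    exact (mem_closure_iff_infDist_zero hlne).2 hzero
  exact ⟨y0, hy0K, hy0line⟩
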